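/- Let f : ℝ^d → ℝ and h : ℝ^d → ℝ^n be differentiable, and fix c > 0, ω > 0, η_x > 0, η > 0. Applying dual-first gradient descent–optimistic ascent with optimism coefficient ω to the Augmented Lagrangian L_c(x,μ) = f(x) + μᵀh(x) + (c/2)‖h(x)‖² yields primal iterates that coincide with those of dual-first gradient descent–optimistic ascent with optimism coefficient c + ω applied to the standard Lagrangian L(x,μ) = f(x) + μᵀh(x), under the dual initialization shift ν_0 = μ_0 + (c)·h(x_0) relating the two multiplier sequences and matching primal initialization x_0. -/
import Mathlib


theorem stmt_16 (d n : ℕ)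
    (f : EuclideanSpace ℝ (Fin d) → ℝ)
    (h : EuclideanSpace ℝ (Fin d) → EuclideanSpace ℝ (Fin n))
    (hf : Differentiable ℝ f) (hh : Differentiable ℝ h)
    (c ω ηx η : ℝ) (hc : 0 < c) (hω : 0 < ω) (hηx : 0 < ηx) (hη : 0 < η)
    (x x' : ℕ → EuclideanSpace ℝ (Fin d))
    (μ ν : ℕ → EuclideanSpace ℝ (Fin n))
    -- dual-first optimistic ascent with coefficient ω on the Augmented
    -- Lagrangian L_c :  ∇_μ L_c(x,μ) = h(x),
    -- ∇_x L_c(x,μ) = ∇f(x) + ∇h(x)ᵀ(μ + c h(x))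
    (hμ1 : μ 1 = μ 0 + η • h (x 0))
    (hμ : ∀ t, 1 ≤ t → μ (t + 1) =
      μ t + η • h (x t) + ω • (h (x t) - h (x (t - 1))))
    (hx : ∀ t, x (t + 1) = x t - ηx •
      (gradient f (x t) + (fderiv ℝ h (x t)).adjoint (μ (t + 1) + c • h (x t))))
    -- dual-first optimistic ascent with coefficient c + ω on the standard
    -- Lagrangian L :  ∇_μ L(x,μ) = h(x), ∇_x L(x,μ) = ∇f(x) + ∇h(x)ᵀμ
    (hν1 : ν 1 = ν 0 + η • h (x' 0))
    (hν : ∀ t, 1 ≤ t → ν (t + 1) =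
      ν t + η • h (x' t) + (c + ω) • (h (x' t) - h (x' (t - 1))))
    (hx' : ∀ t, x' (t + 1) = x' t - ηx •
      (gradient f (x' t) + (fderiv ℝ h (x' t)).adjoint (ν (t + 1))))
    -- matching primal initialization and shifted dual initialization
    (hx0 : x' 0 = x 0)
    (hν0 : ν 0 = μ 0 + c • h (x 0)) :
    ∀ t, x' t = x t := by
  have key : ∀ t, x' t = x t ∧ ν (t + 1) = μ (t + 1) + c • h (x t) := by
    intro t
    induction t with
    | zero =>
      refine ⟨hx0, ?_⟩
      rw [hν1, hν0, hμ1, hx0]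
      module
    | succ t ih =>
      obtain ⟨ihx, ihν⟩ := ih
      have hxs : x' (t + 1) = x (t + 1) := by
        rw [hx' t, hx t, ihx, ihν]
      refine ⟨hxs, ?_⟩
      have h1 : (1 : ℕ) ≤ t + 1 := Nat.le_add_left 1 t
      have := hν (t + 1) h1
      simp only [Nat.add_sub_cancel] at this
      rw [this, hμ (t + 1) h1, ihν, hxs, ihx]
      simp only [Nat.add_sub_cancel]
      module
  intro t
  match t with
  | 0 => exact hx0
  | Nat.succ t => exact (key (t+1)).1
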